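/- Let x : ℝ → ℝ be a non-increasing function on [0, B] and define the payment p(b) = b·x(b) + ∫_b^B x(s) ds and utility U(b) = β·p(b) − v·x(b) for constants β > 0 and v ≥ 0. Then for all b ∈ [0, B], U(b) ≤ U(v/β), i.e., bidding b* = v/β maximizes utility. -/

import Mathlib

open MeasureTheory intervalIntegral

/-- Bidding b* = v/β maximizes utility under the Myerson payment rule. -/
theorem stmt_0 (B β v : ℝ) (x : ℝ → ℝ)
    (hβ : 0 < β) (hv : 0 ≤ v) (hvB : v / β ≤ B)
    (hx : AntitoneOn x (Set.Icc 0 B)) :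
    ∀ b ∈ Set.Icc (0:ℝ) B,
      β * (b * x b + ∫ s in b..B, x s) - v * x b ≤
      β * ((v / β) * x (v / β) + ∫ s in (v / β)..B, x s) - v * x (v / β) := by
  intro b hb
  set c := v / β with hc
  have hc0 : 0 ≤ c := div_nonneg hv hβ.le
  have hcI : c ∈ Set.Icc (0:ℝ) B := ⟨hc0, hvB⟩
  obtain ⟨hb0, hbB⟩ := hb
  have hbI : b ∈ Set.Icc (0:ℝ) B := ⟨hb0, hbB⟩
  have hBI : B ∈ Set.Icc (0:ℝ) B := ⟨le_trans hc0 hvB, le_refl B⟩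
  have hint : ∀ a d : ℝ, a ∈ Set.Icc (0:ℝ) B → d ∈ Set.Icc (0:ℝ) B →
      IntervalIntegrable x volume a d := fun a d ha hd =>
    (hx.mono (Set.uIcc_subset_Icc ha hd)).intervalIntegrable
  have hsplit : (∫ s in b..B, x s) = (∫ s in b..c, x s) + ∫ s in c..B, x s :=
    (integral_add_adjacent_intervals (hint b c hbI hcI) (hint c B hcI hBI)).symm
  have hvc : v = β * c := by rw [hc]; field_simp
  have key : (∫ s in b..c, x s) ≤ (c - b) * x b := by
    rcases le_total b c with h | h
    · have := intervalIntegral.integral_mono_on h (hint b c hbI hcI)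
        (_root_.intervalIntegrable_const (c := x b)) (fun s hs =>
          hx hbI ⟨le_trans hb0 hs.1, le_trans hs.2 hvB⟩ hs.1)
      simpa using this
    · have h2 : ((b - c) * x b) ≤ ∫ s in c..b, x s := by
        have := intervalIntegral.integral_mono_on h
          (_root_.intervalIntegrable_const (c := x b)) (hint c b hcI hbI)
          (fun s hs => hx ⟨le_trans hc0 hs.1, le_trans hs.2 hbB⟩ hbI hs.2)
        simpa using this
      rw [intervalIntegral.integral_symm c b]
      linarith
  have key2 := mul_le_mul_of_nonneg_left key hβ.le
  rw [hsplit, hvc]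
  nlinarith [key2]
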